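/- Let m, n be positive integers, let 1 ≤ k ≤ m and 1 ≤ s ≤ q < ∞, and set ρ = msq/(kq + (m−k)s). Then for every scalar matrix a = (a_i)_{i ∈ M(m,n)} one has (Σ_{i ∈ M(m,n)} |a_i|^ρ)^{1/ρ} ≤ ∏_{S ∈ P_k(m)} ( Σ_{i_S} ( Σ_{i_Ŝ} |a_i|^q )^{s/q} )^{(1/s)·(1/C(m,k))}, where for each S ⊆ {1,...,m} with card(S)=k, Σ_{i_S} ranges over the indices i_j with j ∈ S (each from 1 to n), Σ_{i_Ŝ} ranges over the indices i_j with j ∉ S, and C(m,k) is the binomial coefficient m choose k. -/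

import Mathlib

open scoped BigOperators ENNReal
open Finset

/-- Finite generalized Hölder. -/
lemma myHolder {ι α : Type*} [Fintype α] (T : Finset ι) (f : ι → α → ℝ≥0∞) (p : ι → ℝ)
    (hp : ∀ t ∈ T, 0 < p t) (hsum : ∑ t ∈ T, 1 / p t = 1) :
    ∑ x : α, ∏ t ∈ T, f t x ≤ ∏ t ∈ T, (∑ x : α, f t x ^ p t) ^ (1 / p t) := by
  classical
  letI : MeasurableSpace α := ⊤
  have key := ENNReal.lintegral_prod_norm_pow_le (μ := MeasureTheory.Measure.count)
      T (f := fun t x => f t x ^ p t)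
      (fun t _ => (measurable_from_top).aemeasurable) hsum
      (fun t ht => le_of_lt (by have := hp t ht; positivity))
  have hcount : ∀ g : α → ℝ≥0∞, ∫⁻ x, g x ∂(MeasureTheory.Measure.count) = ∑ x : α, g x := by
    intro g
    rw [MeasureTheory.lintegral_count, tsum_fintype]
  simp only [hcount] at key
  calc ∑ x : α, ∏ t ∈ T, f t x
      = ∑ x : α, ∏ t ∈ T, (f t x ^ p t) ^ (1 / p t) := by
        apply Finset.sum_congr rfl; intro x _
        apply Finset.prod_congr rfl; intro t ht
        rw [← ENNReal.rpow_mul, mul_one_div_cancel (hp t ht).ne', ENNReal.rpow_one]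
    _ ≤ ∏ t ∈ T, (∑ x : α, f t x ^ p t) ^ (1 / p t) := key

/-- Finite Minkowski inequality. -/
lemma myMinkowski {α β : Type*} [Fintype α] (u : Finset β) (v : α → β → ℝ≥0∞) {r : ℝ}
    (hr : 1 ≤ r) :
    (∑ x : α, (∑ y ∈ u, v x y) ^ r) ^ (1 / r) ≤ ∑ y ∈ u, (∑ x : α, v x y ^ r) ^ (1 / r) := by
  classical
  induction u using Finset.cons_induction with
  | empty =>
      have hr0 : (0:ℝ) < r := lt_of_lt_of_le one_pos hr
      simp [ENNReal.zero_rpow_of_pos hr0, ENNReal.zero_rpow_of_pos (by positivity : (0:ℝ) < 1 / r), hr0]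
  | cons b u hb ih =>
      simp only [Finset.sum_cons]
      calc (∑ x : α, (v x b + ∑ y ∈ u, v x y) ^ r) ^ (1 / r)
          ≤ (∑ x : α, (v x b) ^ r) ^ (1 / r) + (∑ x : α, (∑ y ∈ u, v x y) ^ r) ^ (1 / r) :=
            ENNReal.Lp_add_le _ _ _ hr
        _ ≤ (∑ x : α, (v x b) ^ r) ^ (1 / r) + ∑ y ∈ u, (∑ x : α, v x y ^ r) ^ (1 / r) := by
            gcongr

noncomputable def mnorm (n : ℕ) : (m : ℕ) → (Fin m → ℝ) → ((Fin m → Fin n) → ℝ≥0∞) → ℝ≥0∞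
  | 0, _, f => f finZeroElim
  | m + 1, p, f =>
      (∑ x : Fin n, (mnorm n m (fun j => p j.succ) (fun i => f (Fin.cons x i))) ^ (p 0)) ^
        (1 / p 0)

lemma sum_fin_succ_pi {n m : ℕ} {M : Type*} [AddCommMonoid M] (φ : (Fin (m+1) → Fin n) → M) :
    ∑ i : Fin (m+1) → Fin n, φ i = ∑ x : Fin n, ∑ i' : Fin m → Fin n, φ (Fin.cons x i') := by
  have h := Fintype.sum_equiv (Fin.consEquiv (fun _ => Fin n))
    (fun p : Fin n × (Fin m → Fin n) => φ (Fin.cons p.1 p.2)) φ (fun p => rfl)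
  rw [← h, Fintype.sum_prod_type]

/-- Mixed-norm Hölder inequality. -/
lemma mixed_holder {ι : Type*} (n : ℕ) (T : Finset ι) :
    ∀ (m : ℕ) (f : ι → (Fin m → Fin n) → ℝ≥0∞) (p : ι → Fin m → ℝ),
    (∀ t ∈ T, ∀ j, 0 < p t j) → (∀ j, ∑ t ∈ T, 1 / p t j = 1) →
    ∑ i : Fin m → Fin n, ∏ t ∈ T, f t i ≤ ∏ t ∈ T, mnorm n m (p t) (f t) := by
  intro m
  induction m with
  | zero =>
      intro f p hp hsum
      rw [Fintype.sum_unique]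
      refine le_of_eq (Finset.prod_congr rfl fun t _ => ?_)
      show f t default = mnorm n 0 (p t) (f t)
      simp only [mnorm]
      exact congrArg (f t) (Subsingleton.elim _ _)
  | succ m ih =>
      intro f p hp hsum
      rw [sum_fin_succ_pi]
      calc ∑ x : Fin n, ∑ i' : Fin m → Fin n, ∏ t ∈ T, f t (Fin.cons x i')
          ≤ ∑ x : Fin n, ∏ t ∈ T, mnorm n m (fun j => p t j.succ) (fun i => f t (Fin.cons x i)) := by
            apply Finset.sum_le_sum
            intro x _
            exact ih (fun t i => f t (Fin.cons x i)) (fun t j => p t j.succ)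
              (fun t ht j => hp t ht j.succ) (fun j => hsum j.succ)
        _ ≤ ∏ t ∈ T, (∑ x : Fin n,
              (mnorm n m (fun j => p t j.succ) (fun i => f t (Fin.cons x i))) ^ (p t 0)) ^
              (1 / p t 0) :=
            myHolder T _ _ (fun t ht => hp t ht 0) (hsum 0)
        _ = ∏ t ∈ T, mnorm n (m+1) (p t) (f t) := by
            apply Finset.prod_congr rfl
            intro t _
            rfl
set_option linter.unusedSectionVars false
section reindex

variable {n m : ℕ} (P : Fin (m+1) → Prop) [DecidablePred P]

/-- Extend a function on successor-indices by a value at `0`. -/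
def extFun (x : Fin n) (g' : {j : Fin m // P j.succ} → Fin n) : {j : Fin (m+1) // P j} → Fin n :=
  fun j => Fin.cases (motive := fun i => P i → Fin n) (fun _ => x)
    (fun j' hj' => g' ⟨j', hj'⟩) j.1 j.2

@[simp] lemma extFun_zero (x : Fin n) (g' : {j : Fin m // P j.succ} → Fin n) (h : P 0) :
    extFun P x g' ⟨0, h⟩ = x := by
  simp [extFun]

@[simp] lemma extFun_succ (x : Fin n) (g' : {j : Fin m // P j.succ} → Fin n)
    (j : Fin m) (hj : P j.succ) : extFun P x g' ⟨j.succ, hj⟩ = g' ⟨j, hj⟩ := by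
  simp [extFun]

/-- Restrict a function on successor-indices, when `0` does not satisfy `P`. -/
def resFun (h0 : ¬ P 0) (g' : {j : Fin m // P j.succ} → Fin n) : {j : Fin (m+1) // P j} → Fin n :=
  fun j => Fin.cases (motive := fun i => P i → Fin n) (fun h => absurd h h0)
    (fun j' hj' => g' ⟨j', hj'⟩) j.1 j.2

@[simp] lemma resFun_succ (h0 : ¬ P 0) (g' : {j : Fin m // P j.succ} → Fin n)
    (j : Fin m) (hj : P j.succ) : resFun P h0 g' ⟨j.succ, hj⟩ = g' ⟨j, hj⟩ := by
  simp [resFun]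

def extEquiv (h0 : P 0) :
    (Fin n × ({j : Fin m // P j.succ} → Fin n)) ≃ ({j : Fin (m+1) // P j} → Fin n) :=
    { toFun := fun p => extFun P p.1 p.2
      invFun := fun g => (g ⟨0, h0⟩, fun j' => g ⟨j'.1.succ, j'.2⟩)
      left_inv := by
        rintro ⟨x, g'⟩
        refine Prod.ext ?_ ?_
        · simp
        · funext j'
          rcases j' with ⟨j', hj'⟩
          simp
      right_inv := by
        intro g
        funext j
        rcases j with ⟨j, hj⟩
        induction j using Fin.cases with
        | zero => simp
        | succ j' => simp }

lemma sum_subtype_pos {M : Type*} [AddCommMonoid M] (h0 : P 0)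
    (φ : ({j : Fin (m+1) // P j} → Fin n) → M) :
    ∑ g : {j : Fin (m+1) // P j} → Fin n, φ g
      = ∑ x : Fin n, ∑ g' : {j : Fin m // P j.succ} → Fin n, φ (extFun P x g') := by
  rw [← Fintype.sum_equiv (extEquiv P h0) (fun p => φ (extFun P p.1 p.2)) φ (fun p => rfl),
    Fintype.sum_prod_type]

def resEquiv (h0 : ¬ P 0) :
    ({j : Fin m // P j.succ} → Fin n) ≃ ({j : Fin (m+1) // P j} → Fin n) :=
    { toFun := fun g' => resFun P h0 g'
      invFun := fun g => fun j' => g ⟨j'.1.succ, j'.2⟩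
      left_inv := by
        intro g'
        funext j'
        rcases j' with ⟨j', hj'⟩
        simp
      right_inv := by
        intro g
        funext j
        rcases j with ⟨j, hj⟩
        induction j using Fin.cases with
        | zero => exact absurd hj h0
        | succ j' => simp }

lemma sum_subtype_neg {M : Type*} [AddCommMonoid M] (h0 : ¬ P 0)
    (φ : ({j : Fin (m+1) // P j} → Fin n) → M) :
    ∑ g : {j : Fin (m+1) // P j} → Fin n, φ g
      = ∑ g' : {j : Fin m // P j.succ} → Fin n, φ (resFun P h0 g') :=
  (Fintype.sum_equiv (resEquiv P h0) (fun p => φ (resFun P h0 p)) φ (fun p => rfl)).symm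

end reindex
section merge

def mergeFun {n m : ℕ} (P : Fin m → Prop) [DecidablePred P] (g : {j // P j} → Fin n)
    (h : {j // ¬ P j} → Fin n) : Fin m → Fin n :=
  fun j => if hj : P j then g ⟨j, hj⟩ else h ⟨j, hj⟩

lemma merge_pos {n m : ℕ} (P : Fin (m+1) → Prop) [DecidablePred P] (h0 : P 0)
    (x : Fin n) (g' : {j : Fin m // P j.succ} → Fin n)
    (h' : {j : Fin m // ¬ P j.succ} → Fin n) :
    mergeFun P (extFun P x g') (resFun (fun j => ¬ P j) (not_not_intro h0) h')
      = Fin.cons x (mergeFun (fun j => P j.succ) g' h') := by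
  funext j
  induction j using Fin.cases with
  | zero => simp [mergeFun, h0]
  | succ j' =>
      by_cases hP : P j'.succ
      · simp [mergeFun, hP]
      · simp [mergeFun, hP]

lemma merge_neg {n m : ℕ} (P : Fin (m+1) → Prop) [DecidablePred P] (h0 : ¬ P 0)
    (x : Fin n) (g' : {j : Fin m // P j.succ} → Fin n)
    (h' : {j : Fin m // ¬ P j.succ} → Fin n) :
    mergeFun P (resFun P h0 g') (extFun (fun j => ¬ P j) x h')
      = Fin.cons x (mergeFun (fun j => P j.succ) g' h') := by
  funext j
  induction j using Fin.cases with
  | zero => simp [mergeFun, h0]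
  | succ j' =>
      by_cases hP : P j'.succ
      · simp [mergeFun, hP]
      · simp [mergeFun, hP]

end merge
section lemmaD

open scoped ENNReal

lemma rpow_rpow (x : ℝ≥0∞) (a b : ℝ) : (x ^ a) ^ b = x ^ (a * b) :=
  (ENNReal.rpow_mul x a b).symm

lemma mnorm_le_double (n : ℕ) {s' q' : ℝ} (hs' : 0 < s') (hsq' : s' ≤ q') :
    ∀ (m : ℕ) (P : Fin m → Prop) [inst : DecidablePred P] (f : (Fin m → Fin n) → ℝ≥0∞),
    mnorm n m (fun j => if P j then s' else q') f ≤
      (∑ g : {j // P j} → Fin n, (∑ h : {j // ¬ P j} → Fin n,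
          (f (mergeFun P g h)) ^ q') ^ (s'/q')) ^ (1/s') := by
  have hq' : 0 < q' := lt_of_lt_of_le hs' hsq'
  intro m
  induction m with
  | zero =>
      intro P inst f
      haveI : IsEmpty {j : Fin 0 // P j} := ⟨fun j => j.1.elim0⟩
      haveI : IsEmpty {j : Fin 0 // ¬ P j} := ⟨fun j => j.1.elim0⟩
      rw [Fintype.sum_unique, Fintype.sum_unique]
      apply le_of_eq
      rw [rpow_rpow, rpow_rpow, show q' * (s' / q' * (1 / s')) = 1 from by field_simp,
        ENNReal.rpow_one]
      show f finZeroElim = f (mergeFun P default default)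
      exact congrArg f (Subsingleton.elim _ _)
  | succ m ih =>
      intro P inst f
      by_cases h0 : P 0
      · -- exponent s' is outermost : no Minkowski needed
        have hmain : ∀ x : Fin n,
            mnorm n m (fun j => if P j.succ then s' else q') (fun i => f (Fin.cons x i)) ≤
            (∑ g' : {j : Fin m // P j.succ} → Fin n,
              (∑ h' : {j : Fin m // ¬ P j.succ} → Fin n,
                (f (Fin.cons x (mergeFun (fun j => P j.succ) g' h'))) ^ q') ^ (s'/q')) ^ (1/s') :=
          fun x => ih (fun j => P j.succ) (fun i => f (Fin.cons x i))
        calc mnorm n (m+1) (fun j => if P j then s' else q') f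
            = (∑ x : Fin n, (mnorm n m (fun j => if P j.succ then s' else q')
                (fun i => f (Fin.cons x i))) ^ s') ^ (1/s') := by
              simp only [mnorm, if_pos h0]
          _ ≤ (∑ x : Fin n, ((∑ g' : {j : Fin m // P j.succ} → Fin n,
                (∑ h' : {j : Fin m // ¬ P j.succ} → Fin n,
                  (f (Fin.cons x (mergeFun (fun j => P j.succ) g' h'))) ^ q') ^ (s'/q')) ^ (1/s')) ^ s')
                ^ (1/s') := by
              refine ENNReal.rpow_le_rpow (Finset.sum_le_sum fun x _ => ?_) (by positivity)
              exact ENNReal.rpow_le_rpow (hmain x) (le_of_lt hs')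
          _ = (∑ x : Fin n, ∑ g' : {j : Fin m // P j.succ} → Fin n,
                (∑ h' : {j : Fin m // ¬ P j.succ} → Fin n,
                  (f (Fin.cons x (mergeFun (fun j => P j.succ) g' h'))) ^ q') ^ (s'/q')) ^ (1/s') := by
              congr 1
              refine Finset.sum_congr rfl fun x _ => ?_
              rw [rpow_rpow]
              rw [one_div_mul_cancel hs'.ne', ENNReal.rpow_one]
          _ = (∑ g : {j : Fin (m+1) // P j} → Fin n,
                (∑ h : {j : Fin (m+1) // ¬ P j} → Fin n,
                  (f (mergeFun P g h)) ^ q') ^ (s'/q')) ^ (1/s') := by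
              congr 1
              rw [sum_subtype_pos P h0 (fun g => (∑ h : {j : Fin (m+1) // ¬ P j} → Fin n,
                  (f (mergeFun P g h)) ^ q') ^ (s'/q'))]
              refine Finset.sum_congr rfl fun x _ => Finset.sum_congr rfl fun g' _ => ?_
              congr 1
              rw [sum_subtype_neg (fun j => ¬ P j) (not_not_intro h0)
                (fun h => (f (mergeFun P (extFun P x g') h)) ^ q')]
              refine Finset.sum_congr rfl fun h' _ => ?_
              rw [merge_pos P h0]
      · -- exponent q' is outermost : use Minkowski
        have hr : 1 ≤ q' / s' := (one_le_div hs').mpr hsq'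
        set U : Fin n → ({j : Fin m // P j.succ} → Fin n) → ℝ≥0∞ := fun x g' =>
          ∑ h' : {j : Fin m // ¬ P j.succ} → Fin n,
            (f (Fin.cons x (mergeFun (fun j => P j.succ) g' h'))) ^ q' with hU
        have hmain : ∀ x : Fin n,
            mnorm n m (fun j => if P j.succ then s' else q') (fun i => f (Fin.cons x i)) ≤
            (∑ g' : {j : Fin m // P j.succ} → Fin n, (U x g') ^ (s'/q')) ^ (1/s') :=
          fun x => ih (fun j => P j.succ) (fun i => f (Fin.cons x i))
        have hmink : (∑ x : Fin n, (∑ g' : {j : Fin m // P j.succ} → Fin n,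
              (U x g') ^ (s'/q')) ^ (q'/s')) ^ (1 / (q'/s'))
            ≤ ∑ g' : {j : Fin m // P j.succ} → Fin n,
              (∑ x : Fin n, ((U x g') ^ (s'/q')) ^ (q'/s')) ^ (1 / (q'/s')) :=
          myMinkowski Finset.univ (fun x g' => (U x g') ^ (s'/q')) hr
        have hVr : ∀ x g', ((U x g') ^ (s'/q')) ^ (q'/s') = U x g' := by
          intro x g'
          rw [rpow_rpow]
          rw [show s'/q' * (q'/s') = 1 by field_simp, ENNReal.rpow_one]
        calc mnorm n (m+1) (fun j => if P j then s' else q') f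
            = (∑ x : Fin n, (mnorm n m (fun j => if P j.succ then s' else q')
                (fun i => f (Fin.cons x i))) ^ q') ^ (1/q') := by
              simp only [mnorm, if_neg h0]
          _ ≤ (∑ x : Fin n, ((∑ g' : {j : Fin m // P j.succ} → Fin n,
                (U x g') ^ (s'/q')) ^ (1/s')) ^ q') ^ (1/q') := by
              refine ENNReal.rpow_le_rpow (Finset.sum_le_sum fun x _ => ?_) (by positivity)
              exact ENNReal.rpow_le_rpow (hmain x) (le_of_lt hq')
          _ = ((∑ x : Fin n, (∑ g' : {j : Fin m // P j.succ} → Fin n,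
                (U x g') ^ (s'/q')) ^ (q'/s')) ^ (1/(q'/s'))) ^ (1/s') := by
              rw [rpow_rpow]
              rw [show 1/(q'/s') * (1/s') = 1/q' by field_simp]
              congr 1
              refine Finset.sum_congr rfl fun x _ => ?_
              rw [rpow_rpow, show 1/s' * q' = q'/s' from by ring]
          _ ≤ (∑ g' : {j : Fin m // P j.succ} → Fin n,
                (∑ x : Fin n, ((U x g') ^ (s'/q')) ^ (q'/s')) ^ (1/(q'/s'))) ^ (1/s') := by
              exact ENNReal.rpow_le_rpow hmink (by positivity)
          _ = (∑ g' : {j : Fin m // P j.succ} → Fin n,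
                (∑ x : Fin n, U x g') ^ (s'/q')) ^ (1/s') := by
              congr 1
              refine Finset.sum_congr rfl fun g' _ => ?_
              rw [show (1/(q'/s')) = s'/q' by rw [one_div_div]]
              congr 1
              exact Finset.sum_congr rfl fun x _ => hVr x g'
          _ = (∑ g : {j : Fin (m+1) // P j} → Fin n,
                (∑ h : {j : Fin (m+1) // ¬ P j} → Fin n,
                  (f (mergeFun P g h)) ^ q') ^ (s'/q')) ^ (1/s') := by
              congr 1
              rw [sum_subtype_neg P h0 (fun g => (∑ h : {j : Fin (m+1) // ¬ P j} → Fin n,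
                  (f (mergeFun P g h)) ^ q') ^ (s'/q'))]
              refine Finset.sum_congr rfl fun g' _ => ?_
              congr 1
              rw [sum_subtype_pos (fun j => ¬ P j) h0
                (fun h => (f (mergeFun P (resFun P h0 g') h)) ^ q')]
              rw [hU]
              refine Finset.sum_congr rfl fun x _ => Finset.sum_congr rfl fun h' _ => ?_
              rw [merge_neg P h0]
end lemmaD
section master

open scoped ENNReal
open Finset

lemma card_filter_mem_powersetCard (m k : ℕ) (hk1 : 1 ≤ k) (j : Fin m) :
    ((Finset.powersetCard k (Finset.univ : Finset (Fin m))).filter (fun S => j ∈ S)).card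
      = (m-1).choose (k-1) := by
  classical
  have : ((Finset.powersetCard k (Finset.univ : Finset (Fin m))).filter (fun S => j ∈ S)).card
      = (Finset.powersetCard (k-1) ((Finset.univ : Finset (Fin m)).erase j)).card := by
    refine Finset.card_bij' (fun S _ => S.erase j) (fun T _ => insert j T) ?hi ?hj ?li ?ri
    case hi =>
      intro S hS
      rw [Finset.mem_filter, Finset.mem_powersetCard] at hS
      rw [Finset.mem_powersetCard]
      exact ⟨Finset.erase_subset_erase j hS.1.1,
        by rw [Finset.card_erase_of_mem hS.2, hS.1.2]⟩
    case hj =>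
      intro T hT
      rw [Finset.mem_powersetCard] at hT
      have hjT : j ∉ T := fun hj => (Finset.mem_erase.mp (hT.1 hj)).1 rfl
      rw [Finset.mem_filter, Finset.mem_powersetCard]
      refine ⟨⟨Finset.subset_univ _, ?_⟩, Finset.mem_insert_self _ _⟩
      rw [Finset.card_insert_of_notMem hjT, hT.2]
      omega
    case li =>
      intro S hS
      have h2 : j ∈ S := (Finset.mem_filter.mp hS).2
      exact Finset.insert_erase h2
    case ri =>
      intro T hT
      have h1 : T ⊆ Finset.univ.erase j := (Finset.mem_powersetCard.mp hT).1
      have hjT : j ∉ T := fun hj => (Finset.mem_erase.mp (h1 hj)).1 rfl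
      exact Finset.erase_insert hjT
  rw [this, Finset.card_powersetCard, Finset.card_erase_of_mem (Finset.mem_univ j),
    Finset.card_univ, Fintype.card_fin]

lemma choose_identity {m k : ℕ} (hm : 0 < m) (hk : 0 < k) :
    m * (m-1).choose (k-1) = k * m.choose k := by
  cases m with
  | zero => omega
  | succ m' =>
      cases k with
      | zero => omega
      | succ k' => simpa [Nat.succ_sub_one, mul_comm] using Nat.add_one_mul_choose_eq m' k'

lemma master_ineq {m n k : ℕ} (hm : 0 < m) (hk1 : 1 ≤ k) (hkm : k ≤ m) {s q : ℝ}
    (hs : 1 ≤ s) (hsq : s ≤ q) (F : (Fin m → Fin n) → ℝ≥0∞) :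
    (∑ i : Fin m → Fin n, F i ^ ((m : ℝ) * s * q / ((k : ℝ) * q + ((m : ℝ) - k) * s))) ^
        (((k : ℝ) * q + ((m : ℝ) - k) * s) / ((m : ℝ) * s * q)) ≤
      ∏ S ∈ Finset.powersetCard k (Finset.univ : Finset (Fin m)),
        (∑ g : {j // j ∈ S} → Fin n,
            (∑ h : {j // ¬ j ∈ S} → Fin n,
                (F (mergeFun (fun j => j ∈ S) g h)) ^ q) ^ (s/q)) ^
          ((1 / s) * (1 / (m.choose k : ℝ))) := by
  classical
  have hs0 : (0:ℝ) < s := lt_of_lt_of_le one_pos hs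
  have hq0 : (0:ℝ) < q := lt_of_lt_of_le hs0 hsq
  have hm0 : (0:ℝ) < m := Nat.cast_pos.mpr hm
  have hk0 : (0:ℝ) < k := Nat.cast_pos.mpr hk1
  have hmk : (0:ℝ) ≤ (m:ℝ) - k := by
    have := (Nat.cast_le (α := ℝ)).mpr hkm; linarith
  have hden : (0:ℝ) < (k : ℝ) * q + ((m : ℝ) - k) * s := by positivity
  set ρ : ℝ := (m : ℝ) * s * q / ((k : ℝ) * q + ((m : ℝ) - k) * s) with hρdef
  have hρ : 0 < ρ := by positivity
  set N : ℝ := (m.choose k : ℝ) with hNdef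
  have hN : 0 < N := by
    rw [hNdef]
    exact_mod_cast Nat.choose_pos hkm
  set P := Finset.powersetCard k (Finset.univ : Finset (Fin m)) with hPdef
  have hcardP : P.card = m.choose k := by
    rw [hPdef, Finset.card_powersetCard, Finset.card_univ, Fintype.card_fin]
  -- exponents for the mixed Hölder inequality
  set p : Finset (Fin m) → Fin m → ℝ := fun S j => if j ∈ S then s * N / ρ else q * N / ρ
    with hpdef
  have hppos : ∀ S ∈ P, ∀ j, 0 < p S j := by
    intro S _ j
    rw [hpdef]
    dsimp only
    split <;> positivity
  have hMC : (m : ℝ) * ((m-1).choose (k-1) : ℝ) = (k : ℝ) * N := by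
    rw [hNdef]
    exact_mod_cast choose_identity hm hk1
  have hcond : ∀ j : Fin m, ∑ S ∈ P, 1 / p S j = 1 := by
    intro j
    have hsplit : ∑ S ∈ P, 1 / p S j
        = ∑ S ∈ P.filter (fun S => j ∈ S), (1 / (s * N / ρ))
          + ∑ S ∈ P.filter (fun S => ¬ j ∈ S), (1 / (q * N / ρ)) := by
      rw [← Finset.sum_filter_add_sum_filter_not P (fun S => j ∈ S)]
      congr 1
      · exact Finset.sum_congr rfl fun S hS => by
          rw [hpdef]; simp [(Finset.mem_filter.mp hS).2]
      · exact Finset.sum_congr rfl fun S hS => by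
          rw [hpdef]; simp [(Finset.mem_filter.mp hS).2]
    have hC : (P.filter (fun S => j ∈ S)).card = (m-1).choose (k-1) :=
      card_filter_mem_powersetCard m k hk1 j
    have hC2 : (P.filter (fun S => j ∈ S)).card + (P.filter (fun S => ¬ j ∈ S)).card
        = m.choose k := by
      rw [Finset.card_filter_add_card_filter_not, hcardP]
    rw [hsplit, Finset.sum_const, Finset.sum_const, nsmul_eq_mul, nsmul_eq_mul]
    have hCr : ((P.filter (fun S => j ∈ S)).card : ℝ) = (k : ℝ) * N / (m : ℝ) := by
      rw [hC]
      rw [eq_div_iff hm0.ne', mul_comm _ (m:ℝ)]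
      exact hMC
    have hC2r : ((P.filter (fun S => ¬ j ∈ S)).card : ℝ) = N - (k : ℝ) * N / (m : ℝ) := by
      have : ((P.filter (fun S => j ∈ S)).card : ℝ)
          + ((P.filter (fun S => ¬ j ∈ S)).card : ℝ) = N := by
        rw [hNdef]; exact_mod_cast hC2
      rw [← hCr]; linarith
    rw [hCr, hC2r, hρdef]
    field_simp
  -- step 1 : rewrite the sum as a sum of products
  have hstep1 : ∑ i : Fin m → Fin n, F i ^ ρ
      = ∑ i : Fin m → Fin n, ∏ S ∈ P, (F i ^ (ρ / N)) := by
    refine Finset.sum_congr rfl fun i _ => ?_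
    rw [Finset.prod_const, hcardP, ← ENNReal.rpow_natCast _ (m.choose k), rpow_rpow]
    congr 1
    rw [← hNdef]
    field_simp
  -- step 2 : mixed Hölder
  have hstep2 : ∑ i : Fin m → Fin n, ∏ S ∈ P, (F i ^ (ρ / N))
      ≤ ∏ S ∈ P, mnorm n m (p S) (fun i => F i ^ (ρ / N)) :=
    mixed_holder n P m (fun _ i => F i ^ (ρ / N)) p hppos hcond
  -- step 3 : bound each mnorm via Minkowski
  have hs' : 0 < s * N / ρ := by positivity
  have hsq' : s * N / ρ ≤ q * N / ρ := by gcongr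
  have hstep3 : ∀ S ∈ P, mnorm n m (p S) (fun i => F i ^ (ρ / N)) ≤
      (∑ g : {j // j ∈ S} → Fin n, (∑ h : {j // ¬ j ∈ S} → Fin n,
          (F (mergeFun (fun j => j ∈ S) g h)) ^ q) ^ (s/q)) ^ (ρ / (s * N)) := by
    intro S _
    have hD := mnorm_le_double n hs' hsq' m (fun j => j ∈ S) (fun i => F i ^ (ρ / N))
    rw [hpdef]
    refine le_trans hD (le_of_eq ?_)
    have e1 : ∀ x : ℝ≥0∞, (x ^ (ρ/N)) ^ (q*N/ρ) = x ^ q := fun x => by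
      rw [rpow_rpow]; congr 1; field_simp
    have e2 : (s*N/ρ) / (q*N/ρ) = s / q := by
      rw [div_div_div_eq]
      rw [div_eq_div_iff (by positivity) (by positivity)]
      ring
    have e3 : 1 / (s*N/ρ) = ρ / (s*N) := one_div_div _ _
    rw [e2, e3]
    simp only [e1]
    congr!
  have hgoalLHSexp : ((k : ℝ) * q + ((m : ℝ) - k) * s) / ((m : ℝ) * s * q) = 1 / ρ := by
    rw [hρdef, one_div_div]
  rw [hgoalLHSexp]
  calc (∑ i : Fin m → Fin n, F i ^ ρ) ^ (1/ρ)
      ≤ (∏ S ∈ P, ((∑ g : {j // j ∈ S} → Fin n, (∑ h : {j // ¬ j ∈ S} → Fin n,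
            (F (mergeFun (fun j => j ∈ S) g h)) ^ q) ^ (s/q)) ^ (ρ / (s * N)))) ^ (1/ρ) := by
        apply ENNReal.rpow_le_rpow _ (by positivity)
        rw [hstep1]
        exact le_trans hstep2 (Finset.prod_le_prod' hstep3)
    _ = ∏ S ∈ P, (∑ g : {j // j ∈ S} → Fin n, (∑ h : {j // ¬ j ∈ S} → Fin n,
            (F (mergeFun (fun j => j ∈ S) g h)) ^ q) ^ (s/q)) ^ ((1/s) * (1/N)) := by
        rw [← ENNReal.prod_rpow_of_nonneg (r := 1/ρ) (by positivity)]
        refine Finset.prod_congr rfl fun S _ => ?_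
        rw [rpow_rpow]
        congr 1
        field_simp

end master
section final

open scoped ENNReal
open Finset

/-- Corollary of Hölder's inequality for mixed sums and Minkowski's inequality:
for `1 ≤ k ≤ m`, `1 ≤ s ≤ q` and `ρ = msq/(kq + (m-k)s)`,
`(Σ_{i ∈ M(m,n)} |a_i|^ρ)^{1/ρ} ≤ ∏_{S ∈ P_k(m)} (Σ_{i_S} (Σ_{i_Ŝ} |a_i|^q)^{s/q})^{(1/s)(1/C(m,k))}`,
where the product runs over all subsets `S ⊆ {1,…,m}` of cardinality `k`, the outer sum over
the indices in `S` and the inner sum over the indices in the complement of `S`. -/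
theorem mixed_holder_minkowski_corollary {𝕂 : Type*} [RCLike 𝕂] (m n : ℕ) (hm : 0 < m)
    (hn : 0 < n) (k : ℕ) (hk1 : 1 ≤ k) (hkm : k ≤ m) (s q : ℝ) (hs : 1 ≤ s) (hsq : s ≤ q)
    (a : (Fin m → Fin n) → 𝕂) :
    (∑ i : Fin m → Fin n, ‖a i‖ ^ ((m : ℝ) * s * q / ((k : ℝ) * q + ((m : ℝ) - k) * s))) ^
        (((k : ℝ) * q + ((m : ℝ) - k) * s) / ((m : ℝ) * s * q)) ≤
      ∏ S ∈ Finset.powersetCard k (Finset.univ : Finset (Fin m)),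
        (∑ g : {x // x ∈ S} → Fin n,
            (∑ h : {x // x ∈ Sᶜ} → Fin n,
                ‖a (fun j => if hj : j ∈ S then g ⟨j, hj⟩
                    else h ⟨j, Finset.mem_compl.mpr hj⟩)‖ ^ q) ^ (s / q)) ^
          ((1 / s) * (1 / (m.choose k : ℝ))) := by
  classical
  have hs0 : (0:ℝ) < s := lt_of_lt_of_le one_pos hs
  have hq0 : (0:ℝ) < q := lt_of_lt_of_le hs0 hsq
  have hm0 : (0:ℝ) < m := Nat.cast_pos.mpr hm
  have hk0 : (0:ℝ) < k := Nat.cast_pos.mpr hk1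
  have hmk : (0:ℝ) ≤ (m:ℝ) - k := by
    have := (Nat.cast_le (α := ℝ)).mpr hkm; linarith
  have hden : (0:ℝ) < (k : ℝ) * q + ((m : ℝ) - k) * s := by positivity
  set ρ : ℝ := (m : ℝ) * s * q / ((k : ℝ) * q + ((m : ℝ) - k) * s) with hρdef
  have hρ : 0 < ρ := by positivity
  set F : (Fin m → Fin n) → ℝ≥0∞ := fun i => (‖a i‖₊ : ℝ≥0∞) with hFdef
  have hFtop : ∀ i, F i ≠ ⊤ := fun i => ENNReal.coe_ne_top
  have master := master_ineq (n := n) hm hk1 hkm hs hsq F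
  -- finiteness of all the pieces
  have hY : ∀ (S : Finset (Fin m)) (g : {j // j ∈ S} → Fin n),
      (∑ h : {j // ¬ j ∈ S} → Fin n, F (mergeFun (fun j => j ∈ S) g h) ^ q) ≠ ⊤ := by
    intro S g
    rw [← lt_top_iff_ne_top]
    exact ENNReal.sum_lt_top.mpr fun h _ =>
      (ENNReal.rpow_ne_top_of_nonneg (le_of_lt hq0) (hFtop _)).lt_top
  have hX : ∀ (S : Finset (Fin m)),
      (∑ g : {j // j ∈ S} → Fin n,
        (∑ h : {j // ¬ j ∈ S} → Fin n, F (mergeFun (fun j => j ∈ S) g h) ^ q) ^ (s/q)) ≠ ⊤ := by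
    intro S
    rw [← lt_top_iff_ne_top]
    exact ENNReal.sum_lt_top.mpr fun g _ =>
      (ENNReal.rpow_ne_top_of_nonneg (by positivity) (hY S g)).lt_top
  have hRHStop : (∏ S ∈ Finset.powersetCard k (Finset.univ : Finset (Fin m)),
      (∑ g : {j // j ∈ S} → Fin n,
        (∑ h : {j // ¬ j ∈ S} → Fin n, F (mergeFun (fun j => j ∈ S) g h) ^ q) ^ (s/q)) ^
          ((1 / s) * (1 / (m.choose k : ℝ)))) ≠ ⊤ := by
    rw [← lt_top_iff_ne_top]
    exact ENNReal.prod_lt_top fun S _ =>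
      (ENNReal.rpow_ne_top_of_nonneg (by positivity) (hX S)).lt_top
  have key := ENNReal.toReal_mono hRHStop master
  -- identify the left-hand sides
  have hnorm : ∀ (i : Fin m → Fin n) (r : ℝ), ‖a i‖ ^ r = (F i ^ r).toReal := by
    intro i r
    rw [← ENNReal.toReal_rpow]
    congr 1
  have hLHS : (∑ i : Fin m → Fin n, ‖a i‖ ^ ρ) ^
      (((k : ℝ) * q + ((m : ℝ) - k) * s) / ((m : ℝ) * s * q))
      = ((∑ i : Fin m → Fin n, F i ^ ρ) ^
          (((k : ℝ) * q + ((m : ℝ) - k) * s) / ((m : ℝ) * s * q))).toReal := by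
    rw [← ENNReal.toReal_rpow]
    congr 1
    rw [ENNReal.toReal_sum (fun i _ => ENNReal.rpow_ne_top_of_nonneg (le_of_lt hρ) (hFtop i))]
    exact Finset.sum_congr rfl fun i _ => hnorm i ρ
  -- identify the right-hand sides
  have hRHS : (∏ S ∈ Finset.powersetCard k (Finset.univ : Finset (Fin m)),
      (∑ g : {x // x ∈ S} → Fin n,
          (∑ h : {x // x ∈ Sᶜ} → Fin n,
              ‖a (fun j => if hj : j ∈ S then g ⟨j, hj⟩
                  else h ⟨j, Finset.mem_compl.mpr hj⟩)‖ ^ q) ^ (s / q)) ^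
        ((1 / s) * (1 / (m.choose k : ℝ))))
      = (∏ S ∈ Finset.powersetCard k (Finset.univ : Finset (Fin m)),
        (∑ g : {j // j ∈ S} → Fin n,
          (∑ h : {j // ¬ j ∈ S} → Fin n, F (mergeFun (fun j => j ∈ S) g h) ^ q) ^ (s/q)) ^
            ((1 / s) * (1 / (m.choose k : ℝ)))).toReal := by
    rw [ENNReal.toReal_prod]
    refine Finset.prod_congr rfl fun S _ => ?_
    rw [← ENNReal.toReal_rpow]
    congr 1
    rw [ENNReal.toReal_sum (fun g _ => ENNReal.rpow_ne_top_of_nonneg (by positivity) (hY S g))]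
    refine Finset.sum_congr rfl fun g _ => ?_
    rw [← ENNReal.toReal_rpow]
    congr 1
    rw [ENNReal.toReal_sum (fun h _ =>
      ENNReal.rpow_ne_top_of_nonneg (le_of_lt hq0) (hFtop _))]
    refine Fintype.sum_equiv
      (Equiv.arrowCongr (Equiv.subtypeEquivRight (fun x => Finset.mem_compl))
        (Equiv.refl (Fin n))) _ _ fun h => ?_
    rw [hnorm]
    congr 2
  rw [hLHS, hRHS]
  exact key

end final
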